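/- Let n ≤ m be integers and let U_n, …, U_m ⊂ ℂ be nonempty compact sets. Then A ∈ ΨE(U_n,…,U_m) if and only if σ^op(A) = M(U_n,…,U_m). -/

import Mathlib

noncomputable section
open Filter Complex Topology
open scoped ENNReal

/-- The Hilbert space ℓ²(ℤ). -/
abbrev HZ := lp (fun _ : ℤ => ℂ) 2

/-- The standard orthonormal basis of ℓ²(ℤ). -/
def eZ (i : ℤ) : HZ := lp.single 2 i 1

/-- Matrix entry `A_{i,j} = ⟨A e_j, e_i⟩` (inner product linear in the first slot,
here written in Mathlib's convention which is conjugate-linear in the first slot). -/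
def entry (A : HZ →L[ℂ] HZ) (i j : ℤ) : ℂ := inner ℂ (eZ i) (A (eZ j))

/-- The (closed) numerical range `N(A) = clos {⟨Ax,x⟩ : ‖x‖ = 1}`. -/
def numRange (A : HZ →L[ℂ] HZ) : Set ℂ :=
  closure {z | ∃ x : HZ, ‖x‖ = 1 ∧ (inner ℂ x (A x) : ℂ) = z}

/-- The numerical abscissa `r₀(A) = max {Re z : z ∈ N(A)}`. -/
def r0 (A : HZ →L[ℂ] HZ) : ℝ := sSup (Complex.re '' numRange A)

/-- The rotated numerical abscissa `r_φ(A) = max {Re z : z ∈ N(e^{iφ}A)}`. -/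
def rphi (φ : ℝ) (A : HZ →L[ℂ] HZ) : ℝ := r0 (Complex.exp (φ * Complex.I) • A)

lemma memShift (k : ℤ) (x : HZ) : Memℓp (fun j => x (j - k)) 2 := by
  have h := lp.memℓp x
  rw [memℓp_gen_iff (by norm_num)] at h ⊢
  simpa [Function.comp_def] using ((Equiv.subRight k).summable_iff (f := fun i => ‖x i‖ ^ (2:ℝ≥0∞).toReal)).mpr h

def shiftLM (k : ℤ) : HZ →ₗ[ℂ] HZ where
  toFun x := ⟨fun j => x (j - k), memShift k x⟩
  map_add' x y := by ext j; simp [lp.coeFn_add]; rfl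
  map_smul' c x := by ext j; simp [lp.coeFn_smul]

lemma shift_norm (k : ℤ) (x : HZ) : ‖shiftLM k x‖ = ‖x‖ := by
  rw [lp.norm_eq_tsum_rpow (by norm_num) x, lp.norm_eq_tsum_rpow (by norm_num) (shiftLM k x)]
  congr 1
  exact (Equiv.subRight k).tsum_eq (f := fun i => ‖x i‖ ^ (2:ℝ≥0∞).toReal)

/-- The shift operator `V_k` on ℓ²(ℤ), `(V_k x)_j = x_{j-k}`. -/
def Vshift (k : ℤ) : HZ →L[ℂ] HZ :=
  LinearIsometry.toContinuousLinearMap ⟨shiftLM k, shift_norm k⟩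

/-- `B` is a limit operator of `A`: there is a sequence of integers `h` with `|h m| → ∞`
such that `V_{-h_m} A V_{h_m} → B` strongly. -/
def IsLimOp (A B : HZ →L[ℂ] HZ) : Prop :=
  ∃ h : ℕ → ℤ, Tendsto (fun m => |h m|) atTop atTop ∧
    ∀ x : HZ, Tendsto (fun m => Vshift (-(h m)) (A (Vshift (h m) x))) atTop (𝓝 (B x))

/-- The operator spectrum: the set of all limit operators of `A`. -/
def opSpec (A : HZ →L[ℂ] HZ) : Set (HZ →L[ℂ] HZ) := {B | IsLimOp A B}

/-- A band operator: only finitely many diagonals are nonzero. -/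
def IsBandOp (A : HZ →L[ℂ] HZ) : Prop :=
  ∃ N : ℕ, ∀ i j : ℤ, (N : ℤ) < |i - j| → entry A i j = 0

/-- `M(U_n, …, U_m)`: the k-th diagonal has entries in `U k` for `n ≤ k ≤ m`,
and all other diagonals vanish. -/
def Mset (n m : ℤ) (U : ℤ → Set ℂ) : Set (HZ →L[ℂ] HZ) :=
  {A | ∀ i k : ℤ, (n ≤ k → k ≤ m → entry A (i + k) i ∈ U k) ∧
      (¬(n ≤ k ∧ k ≤ m) → entry A (i + k) i = 0)}

/-- The orthogonal projection `P_{k,l}` onto `span{e_k, …, e_l}`. -/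
def projIcc (k l : ℤ) : HZ →L[ℂ] HZ :=
  ∑ i ∈ Finset.Icc k l, (innerSL ℂ (eZ i)).smulRight (eZ i)

/-- The finite matrix `b` placed in `ℓ²(ℤ)` with rows/columns at positions `k, …, k+s`. -/
def embedMat (k : ℤ) (s : ℕ) (b : Fin (s+1) → Fin (s+1) → ℂ) : HZ →L[ℂ] HZ :=
  ∑ p : Fin (s+1), ∑ q : Fin (s+1),
    b p q • (innerSL ℂ (eZ (k + (q : ℤ)))).smulRight (eZ (k + (p : ℤ)))

/-- A finite square matrix whose k-th diagonal entries lie in `U k` for `n ≤ k ≤ m`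
and whose remaining entries vanish. -/
def finPattern (n m : ℤ) (U : ℤ → Set ℂ) (s : ℕ) (b : Fin (s+1) → Fin (s+1) → ℂ) : Prop :=
  ∀ p q : Fin (s+1), (n ≤ (p : ℤ) - (q : ℤ) → (p : ℤ) - (q : ℤ) ≤ m →
      b p q ∈ U ((p : ℤ) - (q : ℤ))) ∧
    (¬(n ≤ (p : ℤ) - (q : ℤ) ∧ (p : ℤ) - (q : ℤ) ≤ m) → b p q = 0)

/-- Pseudo-ergodic operators `ΨE(U_n, …, U_m)`. -/
def PsiE (n m : ℤ) (U : ℤ → Set ℂ) : Set (HZ →L[ℂ] HZ) :=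
  {A | A ∈ Mset n m U ∧ ∀ ε > (0:ℝ), ∀ (s : ℕ) (b : Fin (s+1) → Fin (s+1) → ℂ),
    finPattern n m U s b → ∃ k : ℤ,
      ‖projIcc k (k + s) ∘L A ∘L projIcc k (k + s) - embedMat k s b‖ ≤ ε}


-- ### auxiliary lemmas ###
lemma eZ_apply (i j : ℤ) : (eZ i : ∀ _ : ℤ, ℂ) j = if j = i then 1 else 0 := by
  simp [eZ, lp.single_apply, Pi.single_apply]

lemma inner_eZ_left (i : ℤ) (x : HZ) : (inner ℂ (eZ i) x : ℂ) = x i := by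
  simp [eZ, lp.inner_single_left]

lemma norm_eZ (i : ℤ) : ‖eZ i‖ = 1 := by
  have : (‖eZ i‖ : ℝ)^2 = 1 := by
    have := norm_sq_eq_re_inner (𝕜 := ℂ) (eZ i)
    rw [this, inner_eZ_left, eZ_apply]
    simp
  nlinarith [norm_nonneg (eZ i)]

lemma entry_eq (A : HZ →L[ℂ] HZ) (i j : ℤ) : entry A i j = (A (eZ j)) i := by
  rw [entry, inner_eZ_left]

lemma Vshift_apply (k : ℤ) (x : HZ) (j : ℤ) : (Vshift k x) j = x (j - k) := rfl

lemma Vshift_eZ (k i : ℤ) : Vshift k (eZ i) = eZ (i + k) := by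
  ext j
  rw [Vshift_apply, eZ_apply, eZ_apply]
  have : (j - k = i) ↔ (j = i + k) := by omega
  simp [this]

lemma Vshift_norm (k : ℤ) (x : HZ) : ‖Vshift k x‖ = ‖x‖ := shift_norm k x

lemma entry_conj (A : HZ →L[ℂ] HZ) (h i j : ℤ) :
    entry (Vshift (-h) ∘L A ∘L Vshift h) i j = entry A (i + h) (j + h) := by
  rw [entry_eq, entry_eq]
  simp only [ContinuousLinearMap.comp_apply, Vshift_eZ]
  have e : i - -h = i + h := by ring
  rw [Vshift_apply, e]

-- chunk 2
def rankOne (i j : ℤ) : HZ →L[ℂ] HZ := (innerSL ℂ (eZ j)).smulRight (eZ i)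

lemma rankOne_apply (i j : ℤ) (x : HZ) : rankOne i j x = (x j) • eZ i := by
  simp [rankOne, inner_eZ_left]

lemma rankOne_eZ (i j l : ℤ) : rankOne i j (eZ l) = if l = j then eZ i else 0 := by
  rw [rankOne_apply, eZ_apply]
  rcases eq_or_ne l j with h | h
  · subst h; simp
  · simp [h, Ne.symm h]

lemma norm_apply_le (x : HZ) (i : ℤ) : ‖x i‖ ≤ ‖x‖ := by
  simpa [inner_eZ_left] using (norm_inner_le_norm (𝕜 := ℂ) (eZ i) x).trans
    (by rw [norm_eZ, one_mul])

lemma norm_rankOne_le (i j : ℤ) : ‖rankOne i j‖ ≤ 1 := by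
  refine ContinuousLinearMap.opNorm_le_bound _ zero_le_one (fun x => ?_)
  rw [rankOne_apply, norm_smul, norm_eZ, mul_one, one_mul]
  exact norm_apply_le x j

lemma entry_bound (T : HZ →L[ℂ] HZ) (i j : ℤ) : ‖entry T i j‖ ≤ ‖T‖ := by
  calc ‖entry T i j‖ ≤ ‖eZ i‖ * ‖T (eZ j)‖ := norm_inner_le_norm _ _
    _ ≤ 1 * (‖T‖ * ‖eZ j‖) := by
        rw [norm_eZ]; gcongr; exact T.le_opNorm _
    _ = ‖T‖ := by rw [norm_eZ]; ring

lemma hasSum_expand (x : HZ) : HasSum (fun i => x i • eZ i) x := by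
  have h := lp.hasSum_single (E := fun _ : ℤ => ℂ) (p := 2) (by norm_num) x
  convert h using 2 with i
  simp [eZ, ← lp.single_smul]

lemma clm_ext_eZ {T S : HZ →L[ℂ] HZ} (h : ∀ i, T (eZ i) = S (eZ i)) : T = S := by
  refine ContinuousLinearMap.ext fun x => ?_
  have h1 : HasSum (fun i => x i • T (eZ i)) (T x) := by
    simpa using (hasSum_expand x).mapL T
  have h2 : HasSum (fun i => x i • S (eZ i)) (S x) := by
    simpa using (hasSum_expand x).mapL S
  exact h1.unique (by simp only [h]; exact h2)

lemma sum_smul_coeff (F : Finset ℤ) (c : ℤ → ℂ) (l : ℤ) :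
    ((∑ i ∈ F, c i • eZ i : HZ) : ∀ _ : ℤ, ℂ) l = if l ∈ F then c l else 0 := by
  induction F using Finset.induction with
  | empty => simp [lp.coeFn_zero]
  | insert _ _ hni ih =>
    rename_i a Fs
    rw [Finset.sum_insert hni]
    rw [lp.coeFn_add]
    simp only [Pi.add_apply, lp.coeFn_smul, Pi.smul_apply, ih, eZ_apply]
    by_cases hla : l = a
    · subst hla; simp [hni]
    · simp [hla, Ne.symm, Finset.mem_insert]

lemma reindexIcc {M : Type*} [AddCommMonoid M] (k : ℤ) (s : ℕ) (f : ℤ → M) :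
    ∑ i ∈ Finset.Icc k (k + (s:ℤ)), f i = ∑ p : Fin (s+1), f (k + (p : ℤ)) := by
  rw [← Finset.sum_range (fun t => f (k + (t:ℤ)))]
  apply Finset.sum_nbij' (i := fun (i : ℤ) => (i - k).toNat) (j := fun (t : ℕ) => k + (t:ℤ)) <;>
    intros <;> simp_all [Finset.mem_Icc, Finset.mem_range] <;> omega

lemma projIcc_apply (k : ℤ) (s : ℕ) (x : HZ) :
    projIcc k (k + (s:ℤ)) x = ∑ i ∈ Finset.Icc k (k + (s:ℤ)), (x i) • eZ i := by
  rw [projIcc, ContinuousLinearMap.sum_apply]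
  refine Finset.sum_congr rfl fun i _ => ?_
  simp [inner_eZ_left]

lemma projIcc_coeff (k : ℤ) (s : ℕ) (x : HZ) (l : ℤ) :
    (projIcc k (k + (s:ℤ)) x) l = if l ∈ Finset.Icc k (k + (s:ℤ)) then x l else 0 := by
  rw [projIcc_apply, sum_smul_coeff]

lemma projIcc_eZ_mem (k : ℤ) (s : ℕ) {i : ℤ} (hi : i ∈ Finset.Icc k (k + (s:ℤ))) :
    projIcc k (k + (s:ℤ)) (eZ i) = eZ i := by
  ext l
  rw [projIcc_coeff, eZ_apply]
  rcases eq_or_ne l i with h | h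
  · subst h; simp [hi, eZ_apply]
  · simp [h, eZ_apply]

lemma entry_sub (T S : HZ →L[ℂ] HZ) (i j : ℤ) :
    entry (T - S) i j = entry T i j - entry S i j := by
  simp [entry, inner_sub_right]

lemma entry_window (T : HZ →L[ℂ] HZ) (k : ℤ) (s : ℕ) {i j : ℤ}
    (hi : i ∈ Finset.Icc k (k + (s:ℤ))) (hj : j ∈ Finset.Icc k (k + (s:ℤ))) :
    entry (projIcc k (k + (s:ℤ)) ∘L T ∘L projIcc k (k + (s:ℤ))) i j = entry T i j := by
  rw [entry_eq, ContinuousLinearMap.comp_apply, ContinuousLinearMap.comp_apply,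
    projIcc_eZ_mem k s hj, projIcc_coeff]
  rw [if_pos hi, entry_eq]

lemma entry_embed (k : ℤ) (s : ℕ) (b : Fin (s+1) → Fin (s+1) → ℂ) (p q : Fin (s+1)) :
    entry (embedMat k s b) (k + (p:ℤ)) (k + (q:ℤ)) = b p q := by
  rw [entry_eq, embedMat]
  rw [ContinuousLinearMap.sum_apply]
  have hcoe : ∀ (y : Fin (s+1) → HZ) (F : Finset (Fin (s+1))) (l : ℤ),
      ((∑ i ∈ F, y i : HZ) : ∀ _ : ℤ, ℂ) l = ∑ i ∈ F, (y i) l := by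
    intro y F l
    induction F using Finset.induction with
    | empty => simp [lp.coeFn_zero]
    | insert _ _ hni ih => rename_i a Fs; rw [Finset.sum_insert hni, Finset.sum_insert hni,
            lp.coeFn_add]; exact congrArg ((y a : ∀ _ : ℤ, ℂ) l + ·) ih
  rw [hcoe]
  rw [Finset.sum_eq_single p]
  · rw [ContinuousLinearMap.sum_apply, hcoe, Finset.sum_eq_single q]
    · simp only [ContinuousLinearMap.smul_apply, ContinuousLinearMap.smulRight_apply,
        innerSL_apply_apply, inner_eZ_left, eZ_apply]
      simp [lp.coeFn_smul, eZ_apply]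
    · intro q' _ hq'
      have hv : ¬(((q':Fin (s+1)):ℤ) = ((q:Fin (s+1)):ℤ)) := fun hc =>
        hq' (Fin.ext (by exact_mod_cast hc))
      simp only [ContinuousLinearMap.smul_apply, ContinuousLinearMap.smulRight_apply,
        innerSL_apply_apply, inner_eZ_left, eZ_apply]
      have hne : ¬(k + ((q' : Fin (s+1)) : ℤ) = k + ((q : Fin (s+1)) : ℤ)) := by omega
      rw [if_neg hne]
      simp [lp.coeFn_zero]
    · intro h; exact absurd (Finset.mem_univ q) h
  · intro p' _ hp'
    rw [ContinuousLinearMap.sum_apply, hcoe]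
    apply Finset.sum_eq_zero
    intro q' _
    simp only [ContinuousLinearMap.smul_apply, ContinuousLinearMap.smulRight_apply,
      innerSL_apply_apply, lp.coeFn_smul, Pi.smul_apply, eZ_apply]
    have hne : (k + (p:ℤ)) ≠ (k + (p':ℤ)) := by
      simp only [ne_eq, add_right_inj, Int.natCast_inj]
      exact fun hc => hp' (Fin.ext hc).symm
    simp [hne]
  · intro h; exact absurd (Finset.mem_univ p) h

-- chunk 4
lemma memIccFin (k : ℤ) (s : ℕ) (p : Fin (s+1)) :
    k + (p:ℤ) ∈ Finset.Icc k (k + (s:ℤ)) := by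
  have := p.isLt
  simp only [Finset.mem_Icc]
  omega

lemma entry_close_of_window {T : HZ →L[ℂ] HZ} {k : ℤ} {s : ℕ}
    {b : Fin (s+1) → Fin (s+1) → ℂ} {ε : ℝ}
    (h : ‖projIcc k (k + (s:ℤ)) ∘L T ∘L projIcc k (k + (s:ℤ)) - embedMat k s b‖ ≤ ε)
    (p q : Fin (s+1)) : ‖entry T (k + (p:ℤ)) (k + (q:ℤ)) - b p q‖ ≤ ε := by
  have hb := entry_bound (projIcc k (k + (s:ℤ)) ∘L T ∘L projIcc k (k + (s:ℤ)) - embedMat k s b)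
    (k + (p:ℤ)) (k + (q:ℤ))
  rw [entry_sub, entry_window T k s (memIccFin k s p) (memIccFin k s q), entry_embed] at hb
  linarith

lemma projIcc_eZ (k : ℤ) (s : ℕ) (i : ℤ) :
    projIcc k (k + (s:ℤ)) (eZ i) = if i ∈ Finset.Icc k (k + (s:ℤ)) then eZ i else 0 := by
  by_cases hi : i ∈ Finset.Icc k (k + (s:ℤ))
  · rw [if_pos hi, projIcc_eZ_mem k s hi]
  · rw [if_neg hi]
    ext l
    rw [projIcc_coeff, lp.coeFn_zero, Pi.zero_apply]
    by_cases hl : l ∈ Finset.Icc k (k + (s:ℤ))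
    · rw [if_pos hl, eZ_apply, if_neg]
      intro h; exact hi (h ▸ hl)
    · rw [if_neg hl]

lemma window_repr (T : HZ →L[ℂ] HZ) (k : ℤ) (s : ℕ) :
    projIcc k (k + (s:ℤ)) ∘L T ∘L projIcc k (k + (s:ℤ)) =
      ∑ p : Fin (s+1), ∑ q : Fin (s+1),
        entry T (k + (p:ℤ)) (k + (q:ℤ)) • rankOne (k + (p:ℤ)) (k + (q:ℤ)) := by
  apply clm_ext_eZ
  intro j
  rw [ContinuousLinearMap.comp_apply, ContinuousLinearMap.comp_apply, projIcc_eZ]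
  rw [ContinuousLinearMap.sum_apply]
  by_cases hj : j ∈ Finset.Icc k (k + (s:ℤ))
  · rw [if_pos hj]
    have hq0 : ∃ q0 : Fin (s+1), j = k + (q0:ℤ) := by
      simp only [Finset.mem_Icc] at hj
      refine ⟨⟨(j - k).toNat, by omega⟩, by simp; omega⟩
    obtain ⟨q0, rfl⟩ := hq0
    rw [projIcc_apply, reindexIcc]
    refine Finset.sum_congr rfl fun p _ => ?_
    rw [ContinuousLinearMap.sum_apply, Finset.sum_eq_single q0]
    · rw [ContinuousLinearMap.smul_apply, rankOne_eZ, if_pos rfl, entry_eq]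
    · intro q' _ hq'
      have hne : ¬(k + (q0:ℤ) = k + (q':ℤ)) := by
        have : ¬(((q0:Fin (s+1)):ℤ) = ((q':Fin (s+1)):ℤ)) := fun hc =>
          hq' (Fin.ext (by exact_mod_cast hc)).symm
        omega
      rw [ContinuousLinearMap.smul_apply, rankOne_eZ, if_neg hne, smul_zero]
    · intro h; exact absurd (Finset.mem_univ q0) h
  · rw [if_neg hj, map_zero, map_zero]
    symm
    apply Finset.sum_eq_zero
    intro p _
    rw [ContinuousLinearMap.sum_apply]
    apply Finset.sum_eq_zero
    intro q _
    rw [ContinuousLinearMap.smul_apply, rankOne_eZ, if_neg, smul_zero]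
    intro h
    exact hj (h ▸ memIccFin k s q)

lemma window_close_of_entries (T : HZ →L[ℂ] HZ) (k : ℤ) (s : ℕ)
    (b : Fin (s+1) → Fin (s+1) → ℂ) :
    ‖projIcc k (k + (s:ℤ)) ∘L T ∘L projIcc k (k + (s:ℤ)) - embedMat k s b‖ ≤
      ∑ p : Fin (s+1), ∑ q : Fin (s+1), ‖entry T (k + (p:ℤ)) (k + (q:ℤ)) - b p q‖ := by
  rw [window_repr, embedMat, ← Finset.sum_sub_distrib]
  refine (norm_sum_le _ _).trans (Finset.sum_le_sum fun p _ => ?_)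
  rw [← Finset.sum_sub_distrib]
  refine (norm_sum_le _ _).trans (Finset.sum_le_sum fun q _ => ?_)
  rw [show ((innerSL ℂ) (eZ (k + (q:ℤ)))).smulRight (eZ (k + (p:ℤ))) =
    rankOne (k + (p:ℤ)) (k + (q:ℤ)) from rfl, ← sub_smul, norm_smul]
  calc ‖entry T (k + (p:ℤ)) (k + (q:ℤ)) - b p q‖ * ‖rankOne (k + (p:ℤ)) (k + (q:ℤ))‖ ≤
      ‖entry T (k + (p:ℤ)) (k + (q:ℤ)) - b p q‖ * 1 := by
        gcongr; exact norm_rankOne_le _ _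
    _ = _ := mul_one _

-- helpers
lemma Mset_offband {n m : ℤ} {U : ℤ → Set ℂ} {A : HZ →L[ℂ] HZ} (hA : A ∈ Mset n m U)
    {i j : ℤ} (h : ¬(n ≤ i - j ∧ i - j ≤ m)) : entry A i j = 0 := by
  have h2 := (hA j (i - j)).2 h
  rwa [show j + (i - j) = i by ring] at h2

lemma Mset_band {n m : ℤ} {U : ℤ → Set ℂ} {A : HZ →L[ℂ] HZ} (hA : A ∈ Mset n m U)
    {i j : ℤ} (h1 : n ≤ i - j) (h2 : i - j ≤ m) : entry A i j ∈ U (i - j) := by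
  have h3 := (hA j (i - j)).1 h1 h2
  rwa [show j + (i - j) = i by ring] at h3

lemma col_expand {n m : ℤ} {A : HZ →L[ℂ] HZ}
    (offband : ∀ i j : ℤ, ¬(n ≤ i - j ∧ i - j ≤ m) → entry A i j = 0) (j : ℤ) :
    A (eZ j) = ∑ i ∈ Finset.Icc (j+n) (j+m), entry A i j • eZ i := by
  ext l
  rw [sum_smul_coeff]
  by_cases hl : l ∈ Finset.Icc (j+n) (j+m)
  · rw [if_pos hl, entry_eq]
  · rw [if_neg hl, ← entry_eq]
    apply offband
    simp only [Finset.mem_Icc] at hl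
    omega

lemma col_diff_bound {n m : ℤ} {A B : HZ →L[ℂ] HZ}
    (hA : ∀ i j : ℤ, ¬(n ≤ i - j ∧ i - j ≤ m) → entry A i j = 0)
    (hB : ∀ i j : ℤ, ¬(n ≤ i - j ∧ i - j ≤ m) → entry B i j = 0) (j : ℤ) :
    ‖A (eZ j) - B (eZ j)‖ ≤ ∑ i ∈ Finset.Icc (j+n) (j+m), ‖entry A i j - entry B i j‖ := by
  rw [col_expand hA j, col_expand hB j, ← Finset.sum_sub_distrib]
  refine (norm_sum_le _ _).trans (Finset.sum_le_sum fun i _ => ?_)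
  rw [← sub_smul, norm_smul, norm_eZ, mul_one]

lemma norm_conj_le (A : HZ →L[ℂ] HZ) (h : ℤ) : ‖Vshift (-h) ∘L A ∘L Vshift h‖ ≤ ‖A‖ := by
  refine ContinuousLinearMap.opNorm_le_bound _ (norm_nonneg A) (fun x => ?_)
  rw [ContinuousLinearMap.comp_apply, ContinuousLinearMap.comp_apply, Vshift_norm]
  calc ‖A (Vshift h x)‖ ≤ ‖A‖ * ‖Vshift h x‖ := A.le_opNorm _
    _ = ‖A‖ * ‖x‖ := by rw [Vshift_norm]

lemma tendsto_of_cols {T : ℕ → HZ →L[ℂ] HZ} {B : HZ →L[ℂ] HZ} {C : ℝ}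
    (hC : ∀ mm, ‖T mm‖ ≤ C) (hCB : ‖B‖ ≤ C)
    (hcol : ∀ j, Tendsto (fun mm => T mm (eZ j)) atTop (𝓝 (B (eZ j)))) (x : HZ) :
    Tendsto (fun mm => T mm x) atTop (𝓝 (B x)) := by
  have hC0 : 0 ≤ C := le_trans (norm_nonneg _) (hC 0)
  rw [Metric.tendsto_atTop]
  intro ε hε
  set δ : ℝ := ε / (2*C + 2) with hδdef
  have hδ : 0 < δ := by positivity
  -- find finite approximation
  have hsum := hasSum_expand x
  rw [HasSum, SummationFilter.unconditional_filter, Metric.tendsto_atTop] at hsum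
  obtain ⟨F0, hF0⟩ := hsum δ hδ
  set y : HZ := ∑ i ∈ F0, x i • eZ i with hy
  have hxy : ‖y - x‖ < δ := by
    have := hF0 F0 (le_refl _)
    rwa [dist_eq_norm] at this
  have hyT : Tendsto (fun mm => T mm y) atTop (𝓝 (B y)) := by
    have : ∀ mm, T mm y = ∑ i ∈ F0, x i • T mm (eZ i) := by
      intro mm; rw [hy, map_sum]; exact Finset.sum_congr rfl fun i _ => by rw [map_smul]
    have hBy : B y = ∑ i ∈ F0, x i • B (eZ i) := by
      rw [hy, map_sum]; exact Finset.sum_congr rfl fun i _ => by rw [map_smul]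
    simp only [this, hBy]
    exact tendsto_finset_sum _ fun i _ => ((hcol i).const_smul _)
  rw [Metric.tendsto_atTop] at hyT
  obtain ⟨N, hN⟩ := hyT δ hδ
  refine ⟨N, fun mm hmm => ?_⟩
  have h1 : ‖T mm x - B x‖ ≤ ‖T mm (x - y)‖ + ‖T mm y - B y‖ + ‖B (y - x)‖ := by
    have : T mm x - B x = T mm (x - y) + (T mm y - B y) + B (y - x) := by
      rw [map_sub, map_sub]; abel
    rw [this]
    calc ‖T mm (x - y) + (T mm y - B y) + B (y - x)‖
        ≤ ‖T mm (x - y) + (T mm y - B y)‖ + ‖B (y - x)‖ := norm_add_le _ _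
      _ ≤ ‖T mm (x - y)‖ + ‖T mm y - B y‖ + ‖B (y - x)‖ := by
          gcongr; exact norm_add_le _ _
  have h2 : ‖T mm (x - y)‖ ≤ C * δ := by
    calc ‖T mm (x - y)‖ ≤ ‖T mm‖ * ‖x - y‖ := (T mm).le_opNorm _
      _ ≤ C * δ := by
          apply mul_le_mul (hC mm) _ (norm_nonneg _) hC0
          rw [← neg_sub, norm_neg]; exact hxy.le
  have h3 : ‖B (y - x)‖ ≤ C * δ := by
    calc ‖B (y - x)‖ ≤ ‖B‖ * ‖y - x‖ := B.le_opNorm _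
      _ ≤ C * δ := mul_le_mul hCB hxy.le (norm_nonneg _) hC0
  have h4 : ‖T mm y - B y‖ < δ := by
    have := hN mm hmm; rwa [dist_eq_norm] at this
  rw [dist_eq_norm]
  have : (2*C + 1) * δ < (2*C + 2) * δ := by nlinarith
  have hfin : (2*C + 2) * δ = ε := by
    rw [hδdef]; field_simp
  linarith

-- chunk 6
lemma opSpec_subset_Mset {n m : ℤ} {U : ℤ → Set ℂ}
    (hU : ∀ k : ℤ, n ≤ k → k ≤ m → (U k).Nonempty ∧ IsCompact (U k))
    {A : HZ →L[ℂ] HZ} (hA : A ∈ Mset n m U) : opSpec A ⊆ Mset n m U := by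
  rintro B ⟨h, _, hconv⟩
  intro i k
  have ht : Tendsto (fun mm => entry A (i + k + h mm) (i + h mm)) atTop
      (𝓝 (entry B (i + k) i)) := by
    have h1 : Tendsto (fun mm => Vshift (-(h mm)) (A (Vshift (h mm) (eZ i)))) atTop
        (𝓝 (B (eZ i))) := hconv (eZ i)
    have h2 : Tendsto (fun mm => (inner ℂ (eZ (i+k))
        (Vshift (-(h mm)) (A (Vshift (h mm) (eZ i)))) : ℂ)) atTop
        (𝓝 (inner ℂ (eZ (i+k)) (B (eZ i)))) := Tendsto.inner tendsto_const_nhds h1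
    have h3 : ∀ mm, (inner ℂ (eZ (i+k)) (Vshift (-(h mm)) (A (Vshift (h mm) (eZ i)))) : ℂ)
        = entry A (i + k + h mm) (i + h mm) := by
      intro mm
      have := entry_conj A (h mm) (i + k) i
      rw [entry] at this
      simpa using this
    rw [entry]
    simp only [h3] at h2
    exact h2
  constructor
  · intro hk1 hk2
    have hcl : IsClosed (U k) := (hU k hk1 hk2).2.isClosed
    refine hcl.mem_of_tendsto ht (Eventually.of_forall fun mm => ?_)
    have := Mset_band hA (i := i + k + h mm) (j := i + h mm) (by ring_nf; simpa using hk1) (by ring_nf; simpa using hk2)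
    rwa [show (i + k + h mm) - (i + h mm) = k by ring] at this
  · intro hk
    have hz : ∀ mm : ℕ, entry A (i + k + h mm) (i + h mm) = 0 := by
      intro mm
      apply Mset_offband hA
      rwa [show (i + k + h mm) - (i + h mm) = k by ring]
    simp only [hz] at ht
    exact (tendsto_nhds_unique ht tendsto_const_nhds)

lemma coeFn_sum' {ι : Type*} [DecidableEq ι] (y : ι → HZ) (F : Finset ι) (l : ℤ) :
    ((∑ i ∈ F, y i : HZ) : ∀ _ : ℤ, ℂ) l = ∑ i ∈ F, (y i) l := by
  induction F using Finset.induction with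
  | empty => simp [lp.coeFn_zero]
  | insert _ _ hni ih => rename_i a Fs; rw [Finset.sum_insert hni, Finset.sum_insert hni,
          lp.coeFn_add]; exact congrArg ((y a : ∀ _ : ℤ, ℂ) l + ·) ih

lemma entry_embed_zero (k : ℤ) (s : ℕ) (b : Fin (s+1) → Fin (s+1) → ℂ) {i j : ℤ}
    (h : i ∉ Finset.Icc k (k + (s:ℤ)) ∨ j ∉ Finset.Icc k (k + (s:ℤ))) :
    entry (embedMat k s b) i j = 0 := by
  rw [entry_eq, embedMat, ContinuousLinearMap.sum_apply, coeFn_sum']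
  apply Finset.sum_eq_zero
  intro p _
  rw [ContinuousLinearMap.sum_apply, coeFn_sum']
  apply Finset.sum_eq_zero
  intro q _
  rw [show ((innerSL ℂ) (eZ (k + (q:ℤ)))).smulRight (eZ (k + (p:ℤ))) =
    rankOne (k + (p:ℤ)) (k + (q:ℤ)) from rfl]
  rw [ContinuousLinearMap.smul_apply, rankOne_eZ]
  rcases h with h | h
  · by_cases hj : j = k + (q:ℤ)
    · rw [if_pos hj, lp.coeFn_smul, Pi.smul_apply, eZ_apply, if_neg, smul_zero]
      intro hc; exact h (hc ▸ memIccFin k s p)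
    · rw [if_neg hj, smul_zero, lp.coeFn_zero, Pi.zero_apply]
  · rw [if_neg, smul_zero, lp.coeFn_zero, Pi.zero_apply]
    intro hc; exact h (hc ▸ memIccFin k s q)

lemma entry_add (T S : HZ →L[ℂ] HZ) (i j : ℤ) :
    entry (T + S) i j = entry T i j + entry S i j := by
  simp [entry, inner_add_right]

lemma entry_Vshift (k i j : ℤ) : entry (Vshift k) i j = if i = j + k then 1 else 0 := by
  rw [entry_eq, Vshift_eZ, eZ_apply]

lemma entry_Lop (n m : ℤ) (u : ℤ → ℂ) (i j : ℤ) :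
    entry (∑ k ∈ Finset.Icc n m, u k • Vshift k) i j =
      if n ≤ i - j ∧ i - j ≤ m then u (i - j) else 0 := by
  have : entry (∑ k ∈ Finset.Icc n m, u k • Vshift k) i j
      = ∑ k ∈ Finset.Icc n m, u k * entry (Vshift k) i j := by
    rw [entry_eq, ContinuousLinearMap.sum_apply, coeFn_sum']
    refine Finset.sum_congr rfl fun k _ => ?_
    rw [ContinuousLinearMap.smul_apply, lp.coeFn_smul, Pi.smul_apply, ← entry_eq, smul_eq_mul]
  rw [this]
  by_cases hb : n ≤ i - j ∧ i - j ≤ m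
  · rw [if_pos hb, Finset.sum_eq_single (i - j)]
    · rw [entry_Vshift, if_pos (by ring), mul_one]
    · intro k _ hk
      rw [entry_Vshift, if_neg (by omega), mul_zero]
    · intro hmem
      exact absurd (Finset.mem_Icc.mpr hb) hmem
  · rw [if_neg hb]
    apply Finset.sum_eq_zero
    intro k hk
    rw [Finset.mem_Icc] at hk
    rw [entry_Vshift, if_neg (by omega), mul_zero]

-- chunk 7 : construction of B ∈ Mset with given window pattern, and ⇐ direction
lemma exists_Mset_with_pattern {n m : ℤ} {U : ℤ → Set ℂ}
    (u : ℤ → ℂ) (hu : ∀ k, n ≤ k → k ≤ m → u k ∈ U k)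
    (s : ℕ) (b : Fin (s+1) → Fin (s+1) → ℂ) (hb : finPattern n m U s b) :
    ∃ B ∈ Mset n m U, ∀ p q : Fin (s+1), entry B ((p:ℤ)) ((q:ℤ)) = b p q := by
  set w : Fin (s+1) → Fin (s+1) → ℂ := fun p q =>
    if n ≤ (p:ℤ) - (q:ℤ) ∧ (p:ℤ) - (q:ℤ) ≤ m then u ((p:ℤ) - (q:ℤ)) else 0 with hw
  set B : HZ →L[ℂ] HZ :=
    (∑ k ∈ Finset.Icc n m, u k • Vshift k) + embedMat 0 s b - embedMat 0 s w with hB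
  have hent : ∀ i j : ℤ, entry B i j =
      (if n ≤ i - j ∧ i - j ≤ m then u (i - j) else 0)
        + entry (embedMat 0 s b) i j - entry (embedMat 0 s w) i j := by
    intro i j
    rw [hB, entry_sub, entry_add, entry_Lop]
  have hwin : ∀ i j : ℤ, i ∈ Finset.Icc (0:ℤ) ((s:ℤ)) → j ∈ Finset.Icc (0:ℤ) ((s:ℤ)) →
      ∃ p q : Fin (s+1), i = (p:ℤ) ∧ j = (q:ℤ) := by
    intro i j hi hj
    simp only [Finset.mem_Icc] at hi hj
    exact ⟨⟨i.toNat, by omega⟩, ⟨j.toNat, by omega⟩, by simp; omega, by simp; omega⟩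
  have hentwin : ∀ p q : Fin (s+1), entry B ((p:ℤ)) ((q:ℤ)) = b p q := by
    intro p q
    have e1 : entry (embedMat 0 s b) ((p:ℤ)) ((q:ℤ)) = b p q := by
      have := entry_embed 0 s b p q
      simpa using this
    have e2 : entry (embedMat 0 s w) ((p:ℤ)) ((q:ℤ)) = w p q := by
      have := entry_embed 0 s w p q
      simpa using this
    rw [hent, e1, e2, hw]
    simp only []
    ring
  refine ⟨B, ?_, hentwin⟩
  intro i0 k0
  set i := i0 + k0 with hi
  have hIcc0 : ∀ l : ℤ, l ∈ Finset.Icc (0:ℤ) (0 + (s:ℤ)) ↔ l ∈ Finset.Icc (0:ℤ) ((s:ℤ)) := by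
    intro l; rw [zero_add]
  constructor
  · intro hk1 hk2
    by_cases hwin2 : i ∈ Finset.Icc (0:ℤ) ((s:ℤ)) ∧ i0 ∈ Finset.Icc (0:ℤ) ((s:ℤ))
    · obtain ⟨p, q, hp, hq⟩ := hwin i i0 hwin2.1 hwin2.2
      rw [hi] at hp
      have hthis : entry B (i0 + k0) i0 = b p q := by
        rw [show (i0 + k0) = (p:ℤ) from hp, show i0 = (q:ℤ) from hq, hentwin]
      rw [hthis]
      have hdiff : (p:ℤ) - (q:ℤ) = k0 := by omega
      have := (hb p q).1 (by omega) (by omega)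
      rwa [hdiff] at this
    · have hze : entry (embedMat 0 s b) i i0 = 0 ∧ entry (embedMat 0 s w) i i0 = 0 := by
        constructor <;>
        · apply entry_embed_zero
          rcases (not_and_or.mp hwin2) with h | h
          · left; rw [hIcc0]; exact h
          · right; rw [hIcc0]; exact h
      rw [hent, hze.1, hze.2]
      have hk : i - i0 = k0 := by omega
      rw [hk, if_pos ⟨hk1, hk2⟩]
      simpa using hu k0 hk1 hk2
  · intro hk
    by_cases hwin2 : i ∈ Finset.Icc (0:ℤ) ((s:ℤ)) ∧ i0 ∈ Finset.Icc (0:ℤ) ((s:ℤ))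
    · obtain ⟨p, q, hp, hq⟩ := hwin i i0 hwin2.1 hwin2.2
      rw [hi] at hp
      have hBip : entry B i i0 = b p q := by
        rw [show i = (p:ℤ) from hi.trans hp, show i0 = (q:ℤ) from hq, hentwin]
      rw [hBip]
      exact (hb p q).2 (by omega)
    · have hze : entry (embedMat 0 s b) i i0 = 0 ∧ entry (embedMat 0 s w) i i0 = 0 := by
        constructor <;>
        · apply entry_embed_zero
          rcases (not_and_or.mp hwin2) with h | h
          · left; rw [hIcc0]; exact h
          · right; rw [hIcc0]; exact h
      rw [hent, hze.1, hze.2]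
      have hk' : i - i0 = k0 := by omega
      rw [hk', if_neg hk]
      ring

lemma psiE_of_opSpec {n m : ℤ} {U : ℤ → Set ℂ}
    (hU : ∀ k : ℤ, n ≤ k → k ≤ m → (U k).Nonempty ∧ IsCompact (U k))
    {A : HZ →L[ℂ] HZ} (hA : A ∈ Mset n m U)
    (heq : opSpec A = Mset n m U) : A ∈ PsiE n m U := by
  refine ⟨hA, ?_⟩
  intro ε hε s b hb
  have hu : ∃ u : ℤ → ℂ, ∀ k, n ≤ k → k ≤ m → u k ∈ U k := by
    refine ⟨fun k => if h : n ≤ k ∧ k ≤ m then ((hU k h.1 h.2).1).some else 0,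
      fun k h1 h2 => ?_⟩
    show (if h : n ≤ k ∧ k ≤ m then ((hU k h.1 h.2).1).some else 0) ∈ U k
    rw [dif_pos ⟨h1, h2⟩]
    exact ((hU k h1 h2).1).some_mem
  obtain ⟨u, hu⟩ := hu
  obtain ⟨B, hBM, hBent⟩ := exists_Mset_with_pattern u hu s b hb
  have hBop : B ∈ opSpec A := heq ▸ hBM
  obtain ⟨h, _, hconv⟩ := hBop
  set g : ℕ → ℝ := fun mm => ∑ p : Fin (s+1), ∑ q : Fin (s+1),
    ‖entry A (h mm + (p:ℤ)) (h mm + (q:ℤ)) - b p q‖ with hg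
  have hgt : Tendsto g atTop (𝓝 0) := by
    have h0 : (0:ℝ) = ∑ _p : Fin (s+1), ∑ _q : Fin (s+1), (0:ℝ) := by simp
    rw [hg, h0]
    refine tendsto_finset_sum _ fun p _ => tendsto_finset_sum _ fun q _ => ?_
    have h1 : Tendsto (fun mm => entry A (h mm + (p:ℤ)) (h mm + (q:ℤ))) atTop
        (𝓝 (entry B ((p:ℤ)) ((q:ℤ)))) := by
      have h2 : Tendsto (fun mm => (inner ℂ (eZ (p:ℤ))
          (Vshift (-(h mm)) (A (Vshift (h mm) (eZ (q:ℤ))))) : ℂ)) atTop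
          (𝓝 (inner ℂ (eZ (p:ℤ)) (B (eZ (q:ℤ))))) :=
        Tendsto.inner tendsto_const_nhds (hconv (eZ (q:ℤ)))
      have h3 : ∀ mm, (inner ℂ (eZ (p:ℤ))
          (Vshift (-(h mm)) (A (Vshift (h mm) (eZ (q:ℤ))))) : ℂ)
          = entry A (h mm + (p:ℤ)) (h mm + (q:ℤ)) := by
        intro mm
        have := entry_conj A (h mm) ((p:ℤ)) ((q:ℤ))
        rw [entry] at this
        rw [show (p:ℤ) + h mm = h mm + (p:ℤ) by ring, show (q:ℤ) + h mm = h mm + (q:ℤ) by ring] at this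
        simpa using this
      simp only [h3] at h2
      exact h2
    rw [show (0:ℝ) = ‖entry B ((p:ℤ)) ((q:ℤ)) - b p q‖ by rw [hBent p q]; simp]
    exact (h1.sub tendsto_const_nhds).norm
  have hev : ∀ᶠ mm in atTop, g mm < ε := hgt.eventually (Filter.Tendsto.eventually_lt_const hε tendsto_id) |>.mono (fun _ h => h)
  obtain ⟨mm, hmm⟩ := hev.exists
  refine ⟨h mm, ?_⟩
  refine (window_close_of_entries A (h mm) s b).trans ?_
  exact le_of_lt hmm

-- chunk 8 : occurrences at arbitrarily large |k|
lemma occur {n m : ℤ} {U : ℤ → Set ℂ}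
    (hU : ∀ k : ℤ, n ≤ k → k ≤ m → (U k).Nonempty ∧ IsCompact (U k))
    {A : HZ →L[ℂ] HZ} (hP : A ∈ PsiE n m U) :
    ∀ ε > (0:ℝ), ∀ (s : ℕ) (b : Fin (s+1) → Fin (s+1) → ℂ), finPattern n m U s b →
    ∀ R : ℕ, ∃ k : ℤ, (R:ℤ) ≤ |k| ∧
      ‖projIcc k (k + (s:ℤ)) ∘L A ∘L projIcc k (k + (s:ℤ)) - embedMat k s b‖ ≤ ε := by
  intro ε hε s b hb R
  have hu : ∃ u : ℤ → ℂ, ∀ k, n ≤ k → k ≤ m → u k ∈ U k := by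
    refine ⟨fun k => if h : n ≤ k ∧ k ≤ m then ((hU k h.1 h.2).1).some else 0,
      fun k h1 h2 => ?_⟩
    show (if h : n ≤ k ∧ k ≤ m then ((hU k h.1 h.2).1).some else 0) ∈ U k
    rw [dif_pos ⟨h1, h2⟩]
    exact ((hU k h1 h2).1).some_mem
  obtain ⟨u, hu⟩ := hu
  set off : ℕ := s + 1 + (2*R + n.natAbs + m.natAbs) with hoff
  set S : ℕ := s + off with hS
  set bN : ℕ → ℕ → ℂ := fun p q =>
    b ⟨p % (s+1), Nat.mod_lt _ (Nat.succ_pos s)⟩ ⟨q % (s+1), Nat.mod_lt _ (Nat.succ_pos s)⟩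
    with hbNdef
  have hbN : ∀ p q : ℕ, (hp : p ≤ s) → (hq : q ≤ s) →
      bN p q = b ⟨p, by omega⟩ ⟨q, by omega⟩ := by
    intro p q hp hq
    have e1 : (⟨p % (s+1), Nat.mod_lt _ (Nat.succ_pos s)⟩ : Fin (s+1)) = ⟨p, by omega⟩ :=
      Fin.ext (Nat.mod_eq_of_lt (by omega))
    have e2 : (⟨q % (s+1), Nat.mod_lt _ (Nat.succ_pos s)⟩ : Fin (s+1)) = ⟨q, by omega⟩ :=
      Fin.ext (Nat.mod_eq_of_lt (by omega))
    rw [hbNdef]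
    beta_reduce
    rw [e1, e2]
  set b' : Fin (S+1) → Fin (S+1) → ℂ := fun p q =>
    if (p:ℕ) ≤ s ∧ (q:ℕ) ≤ s then bN (p:ℕ) (q:ℕ)
    else if off ≤ (p:ℕ) ∧ off ≤ (q:ℕ) then bN ((p:ℕ) - off) ((q:ℕ) - off)
    else if n ≤ (p:ℤ) - (q:ℤ) ∧ (p:ℤ) - (q:ℤ) ≤ m then u ((p:ℤ) - (q:ℤ)) else 0
    with hb'def
  have hb' : finPattern n m U S b' := by
    intro p q
    constructor
    · intro h1 h2
      rw [hb'def]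
      beta_reduce
      by_cases hc1 : (p:ℕ) ≤ s ∧ (q:ℕ) ≤ s
      · rw [if_pos hc1]
        rw [hbN _ _ hc1.1 hc1.2]
        have := (hb ⟨(p:ℕ), by omega⟩ ⟨(q:ℕ), by omega⟩).1
        simp only [Fin.val_mk] at this
        exact this h1 h2
      · rw [if_neg hc1]
        by_cases hc2 : off ≤ (p:ℕ) ∧ off ≤ (q:ℕ)
        · rw [if_pos hc2]
          have hps : (p:ℕ) - off ≤ s := by have := p.isLt; omega
          have hqs : (q:ℕ) - off ≤ s := by have := q.isLt; omega
          rw [hbN _ _ hps hqs]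
          have := (hb ⟨(p:ℕ) - off, by omega⟩ ⟨(q:ℕ) - off, by omega⟩).1
          have hde : ((((p:ℕ) - off : ℕ)):ℤ) - ((((q:ℕ) - off : ℕ)):ℤ) = (p:ℤ) - (q:ℤ) := by
            have h1 := hc2.1; have h2 := hc2.2
            omega
          simp only [Fin.val_mk] at this ⊢
          rw [hde] at this
          exact this h1 h2
        · rw [if_neg hc2, if_pos ⟨h1, h2⟩]
          exact hu _ h1 h2
    · intro h
      rw [hb'def]
      beta_reduce
      by_cases hc1 : (p:ℕ) ≤ s ∧ (q:ℕ) ≤ s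
      · rw [if_pos hc1, hbN _ _ hc1.1 hc1.2]
        have := (hb ⟨(p:ℕ), by omega⟩ ⟨(q:ℕ), by omega⟩).2
        simp only [Fin.val_mk] at this
        exact this h
      · rw [if_neg hc1]
        by_cases hc2 : off ≤ (p:ℕ) ∧ off ≤ (q:ℕ)
        · rw [if_pos hc2]
          have hps : (p:ℕ) - off ≤ s := by have := p.isLt; omega
          have hqs : (q:ℕ) - off ≤ s := by have := q.isLt; omega
          rw [hbN _ _ hps hqs]
          have := (hb ⟨(p:ℕ) - off, by omega⟩ ⟨(q:ℕ) - off, by omega⟩).2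
          have hde : ((((p:ℕ) - off : ℕ)):ℤ) - ((((q:ℕ) - off : ℕ)):ℤ) = (p:ℤ) - (q:ℤ) := by
            have h1 := hc2.1; have h2 := hc2.2
            omega
          simp only [Fin.val_mk] at this ⊢
          rw [hde] at this
          exact this h
        · rw [if_neg hc2, if_neg h]
  -- apply pseudo-ergodicity with a smaller ε
  set ε1 : ℝ := ε / (((s:ℝ)+1)^2 + 1) with hε1def
  have hε1 : 0 < ε1 := by rw [hε1def]; positivity
  obtain ⟨k, hk⟩ := hP.2 ε1 hε1 S b' hb'
  have hent : ∀ P Q : Fin (S+1), ‖entry A (k+(P:ℤ)) (k+(Q:ℤ)) - b' P Q‖ ≤ ε1 :=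
    entry_close_of_window hk
  have hsum : (∑ _p : Fin (s+1), ∑ _q : Fin (s+1), ε1) ≤ ε := by
    rw [Finset.sum_const, Finset.sum_const]
    simp only [Finset.card_univ, Fintype.card_fin, nsmul_eq_mul]
    rw [hε1def]
    rw [div_eq_mul_inv]
    have hpos : (0:ℝ) < ((s:ℝ)+1)^2 + 1 := by positivity
    rw [← mul_assoc, ← mul_assoc]
    rw [mul_inv_le_iff₀ hpos]
    have hcast : ((s:ℝ)+1) * ((s:ℝ)+1) = ((s+1 : ℕ):ℝ) * ((s+1:ℕ):ℝ) := by push_cast; ring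
    nlinarith [hε.le, sq_nonneg ((s:ℝ)+1)]
  -- the two candidate positions
  have hC : ∀ k1 : ℤ, (∀ p q : Fin (s+1),
        ‖entry A (k1+(p:ℤ)) (k1+(q:ℤ)) - b p q‖ ≤ ε1) →
      ‖projIcc k1 (k1 + (s:ℤ)) ∘L A ∘L projIcc k1 (k1 + (s:ℤ)) - embedMat k1 s b‖ ≤ ε := by
    intro k1 hent1
    refine (window_close_of_entries A k1 s b).trans ?_
    refine le_trans (Finset.sum_le_sum fun p _ => Finset.sum_le_sum fun q _ => hent1 p q) hsum
  have hC1 : ∀ p q : Fin (s+1), ‖entry A (k+(p:ℤ)) (k+(q:ℤ)) - b p q‖ ≤ ε1 := by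
    intro p q
    have hp := p.isLt; have hq := q.isLt
    have := hent ⟨(p:ℕ), by omega⟩ ⟨(q:ℕ), by omega⟩
    simp only [Fin.val_mk] at this
    rw [hb'def] at this
    beta_reduce at this
    simp only [Fin.val_mk] at this
    rw [if_pos ⟨by omega, by omega⟩, hbN _ _ (by omega) (by omega)] at this
    have heq : (⟨(p:ℕ), by omega⟩ : Fin (s+1)) = p := Fin.ext rfl
    have heq' : (⟨(q:ℕ), by omega⟩ : Fin (s+1)) = q := Fin.ext rfl
    rwa [heq, heq'] at this
  have hC2 : ∀ p q : Fin (s+1),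
      ‖entry A ((k+(off:ℤ))+(p:ℤ)) ((k+(off:ℤ))+(q:ℤ)) - b p q‖ ≤ ε1 := by
    intro p q
    have hp := p.isLt; have hq := q.isLt
    have := hent ⟨off + (p:ℕ), by omega⟩ ⟨off + (q:ℕ), by omega⟩
    simp only [Fin.val_mk] at this
    rw [hb'def] at this
    beta_reduce at this
    simp only [Fin.val_mk] at this
    rw [if_neg (by omega), if_pos ⟨by omega, by omega⟩] at this
    rw [show off + (p:ℕ) - off = (p:ℕ) by omega, show off + (q:ℕ) - off = (q:ℕ) by omega] at this
    rw [hbN _ _ (by omega) (by omega)] at this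
    have heq : (⟨(p:ℕ), by omega⟩ : Fin (s+1)) = p := Fin.ext rfl
    have heq' : (⟨(q:ℕ), by omega⟩ : Fin (s+1)) = q := Fin.ext rfl
    rw [heq, heq'] at this
    have hc : (((off + (p:ℕ) : ℕ)):ℤ) = (off:ℤ) + ((p:ℕ):ℤ) := by push_cast; ring
    have hc' : (((off + (q:ℕ) : ℕ)):ℤ) = (off:ℤ) + ((q:ℕ):ℤ) := by push_cast; ring
    rw [hc, hc'] at this
    rw [show k + ((off:ℤ) + ((p:ℕ):ℤ)) = (k + (off:ℤ)) + ((p:ℕ):ℤ) by ring,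
        show k + ((off:ℤ) + ((q:ℕ):ℤ)) = (k + (off:ℤ)) + ((q:ℕ):ℤ) by ring] at this
    exact this
  rcases le_or_gt (R:ℤ) |k| with hR | hR
  · exact ⟨k, hR, hC k hC1⟩
  · refine ⟨k + (off:ℤ), ?_, hC (k + (off:ℤ)) hC2⟩
    have habs : (off:ℤ) ≤ |k + (off:ℤ)| + |k| := by
      have h1 : |(off:ℤ)| ≤ |k + (off:ℤ)| + |(-k)| := by
        have := abs_add_le (k + (off:ℤ)) (-k)
        simpa using this
      rwa [abs_of_nonneg (by positivity : (0:ℤ) ≤ (off:ℤ)), abs_neg] at h1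
    have hoffge : (2*R : ℤ) ≤ (off:ℤ) := by
      have hn := abs_nonneg (n:ℤ); have hm := abs_nonneg (m:ℤ)
      rw [hoff]; push_cast
      linarith
    linarith

-- chunk 9
lemma Mset_subset_opSpec {n m : ℤ} {U : ℤ → Set ℂ}
    (hU : ∀ k : ℤ, n ≤ k → k ≤ m → (U k).Nonempty ∧ IsCompact (U k))
    {A : HZ →L[ℂ] HZ} (hP : A ∈ PsiE n m U) : Mset n m U ⊆ opSpec A := by
  intro B hB
  have hA : A ∈ Mset n m U := hP.1
  -- patterns : windows of B
  set bB : ∀ mm : ℕ, Fin (2*mm+1) → Fin (2*mm+1) → ℂ :=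
    fun mm p q => entry B ((p:ℤ) - mm) ((q:ℤ) - mm) with hbBdef
  have hbB : ∀ mm : ℕ, finPattern n m U (2*mm) (bB mm) := by
    intro mm p q
    constructor
    · intro h1 h2
      have := Mset_band hB (i := (p:ℤ) - mm) (j := (q:ℤ) - mm)
        (by omega) (by omega)
      rwa [show ((p:ℤ) - mm) - ((q:ℤ) - mm) = (p:ℤ) - (q:ℤ) by ring] at this
    · intro hh
      apply Mset_offband hB
      rwa [show ((p:ℤ) - mm) - ((q:ℤ) - mm) = (p:ℤ) - (q:ℤ) by ring]
  have hocc : ∀ mm : ℕ, ∃ k : ℤ, (((2*mm : ℕ)):ℤ) ≤ |k| ∧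
      ‖projIcc k (k + (((2*mm : ℕ)):ℤ)) ∘L A ∘L projIcc k (k + (((2*mm : ℕ)):ℤ))
        - embedMat k (2*mm) (bB mm)‖ ≤ 1/((mm:ℝ)+1) :=
    fun mm => occur hU hP (1/((mm:ℝ)+1)) (by positivity) (2*mm) (bB mm) (hbB mm) (2*mm)
  choose k hk1 hk2 using hocc
  set h : ℕ → ℤ := fun mm => k mm + mm with hhdef
  have hlow : ∀ mm : ℕ, (mm:ℤ) ≤ |h mm| := by
    intro mm
    have h1 := hk1 mm
    have h2 : |k mm| ≤ |h mm| + |(-(mm:ℤ))| := by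
      have := abs_add_le (h mm) (-(mm:ℤ))
      rw [hhdef] at *
      simpa using this
    rw [abs_neg, abs_of_nonneg (by positivity : (0:ℤ) ≤ (mm:ℤ))] at h2
    push_cast at h1
    linarith
  refine ⟨h, ?_, ?_⟩
  · exact tendsto_atTop_mono hlow tendsto_natCast_atTop_atTop
  · -- strong convergence
    have hcol : ∀ j : ℤ, Tendsto (fun mm => (Vshift (-(h mm)) ∘L A ∘L Vshift (h mm)) (eZ j))
        atTop (𝓝 (B (eZ j))) := by
      intro j
      rw [tendsto_iff_norm_sub_tendsto_zero]
      have hTband : ∀ mm, ∀ i j' : ℤ, ¬(n ≤ i - j' ∧ i - j' ≤ m) →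
          entry (Vshift (-(h mm)) ∘L A ∘L Vshift (h mm)) i j' = 0 := by
        intro mm i j' hij
        rw [entry_conj]
        apply Mset_offband hA
        rwa [show (i + h mm) - (j' + h mm) = i - j' by ring]
      have hBband : ∀ i j' : ℤ, ¬(n ≤ i - j' ∧ i - j' ≤ m) → entry B i j' = 0 :=
        fun i j' hij => Mset_offband hB hij
      apply squeeze_zero (fun mm => norm_nonneg _)
        (fun mm => col_diff_bound (hTband mm) hBband j)
      have h0 : (0:ℝ) = ∑ _i ∈ Finset.Icc (j+n) (j+m), (0:ℝ) := by simp
      rw [h0]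
      refine tendsto_finset_sum _ fun i hi => ?_
      -- each entry difference tends to 0
      have hub : ∀ᶠ mm in atTop, ‖entry (Vshift (-(h mm)) ∘L A ∘L Vshift (h mm)) i j
          - entry B i j‖ ≤ 1/((mm:ℝ)+1) := by
        rw [eventually_atTop]
        refine ⟨i.natAbs + j.natAbs, fun mm hmm => ?_⟩
        have hibd : -(mm:ℤ) ≤ i ∧ i ≤ (mm:ℤ) := by omega
        have hjbd : -(mm:ℤ) ≤ j ∧ j ≤ (mm:ℤ) := by omega
        set P : Fin (2*mm+1) := ⟨(i + mm).toNat, by omega⟩ with hP1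
        set Q : Fin (2*mm+1) := ⟨(j + mm).toNat, by omega⟩ with hQ1
        have hPe : (P:ℤ) = i + mm := by rw [hP1]; simp; omega
        have hQe : (Q:ℤ) = j + mm := by rw [hQ1]; simp; omega
        have hent := entry_close_of_window (hk2 mm) P Q
        rw [hPe, hQe] at hent
        rw [hbBdef] at hent
        beta_reduce at hent
        rw [hPe, hQe] at hent
        rw [show (i + (mm:ℤ)) - mm = i by ring, show (j + (mm:ℤ)) - mm = j by ring] at hent
        rw [show k mm + (i + (mm:ℤ)) = i + h mm by rw [hhdef]; ring,
            show k mm + (j + (mm:ℤ)) = j + h mm by rw [hhdef]; ring] at hent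
        rw [entry_conj]
        exact hent
      exact squeeze_zero' (Eventually.of_forall fun mm => norm_nonneg _) hub
        tendsto_one_div_add_atTop_nhds_zero_nat
    intro x
    have := tendsto_of_cols (T := fun mm => Vshift (-(h mm)) ∘L A ∘L Vshift (h mm))
      (B := B) (C := max ‖A‖ ‖B‖)
      (fun mm => le_trans (norm_conj_le A (h mm)) (le_max_left _ _))
      (le_max_right _ _) hcol x
    exact this


/-- The essential spectrum: the set of `λ` such that `A - λI` is not Fredholm. -/
def essSpec (A : HZ →L[ℂ] HZ) : Set ℂ :=
  {lam | ¬(FiniteDimensional ℂ (LinearMap.ker ((A - lam • (1 : HZ →L[ℂ] HZ) : HZ →L[ℂ] HZ) : HZ →ₗ[ℂ] HZ)) ∧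
      FiniteDimensional ℂ ((LinearMap.range ((A - lam • (1 : HZ →L[ℂ] HZ) : HZ →L[ℂ] HZ) : HZ →ₗ[ℂ] HZ))ᗮ))}

/-- The Hilbert space ℓ²(ℕ). -/
abbrev HN := lp (fun _ : ℕ => ℂ) 2

def eN (i : ℕ) : HN := lp.single 2 i 1

def entryN (A : HN →L[ℂ] HN) (i j : ℕ) : ℂ := inner ℂ (eN i) (A (eN j))

def numRangeN (A : HN →L[ℂ] HN) : Set ℂ :=
  closure {z | ∃ x : HN, ‖x‖ = 1 ∧ (inner ℂ x (A x) : ℂ) = z}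

def r0N (A : HN →L[ℂ] HN) : ℝ := sSup (Complex.re '' numRangeN A)

/-- `A ∈ ΨE(U_n, …, U_m)` if and only if `σ^op(A) = M(U_n, …, U_m)`. -/
theorem pseudoErgodic_iff_opSpec_eq_Mset
    (n m : ℤ) (hnm : n ≤ m) (U : ℤ → Set ℂ)
    (hU : ∀ k : ℤ, n ≤ k → k ≤ m → (U k).Nonempty ∧ IsCompact (U k))
    (A : HZ →L[ℂ] HZ) (hA : A ∈ Mset n m U) :
    A ∈ PsiE n m U ↔ opSpec A = Mset n m U := by
  constructor
  · intro hP
    exact Set.Subset.antisymm (opSpec_subset_Mset hU hA) (Mset_subset_opSpec hU hP)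
  · intro heq
    exact psiE_of_opSpec hU hA heq
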